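/- For all sufficiently large natural numbers x, the product of all prime numbers p ≤ x is at least (x/e)^(x/(3·ln x)); that is, there exists x₀ such that for all natural numbers x ≥ x₀, ∏_{p prime, p ≤ x} p ≥ (x/e)^(x/(3·ln x)) as real numbers. -/

import Mathlib

open Finset

/-- The central binomial coefficient is at most `(2n)^√(2n)` times the primorial of `2n`. -/
lemma centralBinom_le_pow_mul_primorial (n : ℕ) (hn : 0 < n) :
    Nat.centralBinom n ≤
      (2 * n) ^ Nat.sqrt (2 * n) * ∏ p ∈ (Finset.range (2 * n + 1)).filter Nat.Prime, p := by
  have n2_pos : 1 ≤ 2 * n := by omega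
  set P : Finset ℕ := (Finset.range (2 * n + 1)).filter Nat.Prime with hP
  set f : ℕ → ℕ := fun x => x ^ (Nat.centralBinom n).factorization x with hf
  have hprod : ∏ p ∈ P, f p = Nat.centralBinom n := by
    rw [hP]
    rw [show ∏ p ∈ (Finset.range (2 * n + 1)).filter Nat.Prime, f p
        = ∏ p ∈ Finset.range (2 * n + 1), f p from ?_]
    · exact Nat.prod_pow_factorization_centralBinom n
    · refine Finset.prod_filter_of_ne fun p _ h => ?_
      contrapose! h
      simp [hf, Nat.factorization_eq_zero_of_not_prime _ h]
  rw [← hprod, ← Finset.prod_filter_mul_prod_filter_not P (· ≤ Nat.sqrt (2 * n))]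
  apply Nat.mul_le_mul
  · refine (Finset.prod_le_prod' fun p _ => (?_ : f p ≤ 2 * n)).trans ?_
    · exact Nat.pow_factorization_choose_le (by omega)
    have hcard : (Finset.Icc 1 (Nat.sqrt (2 * n))).card = Nat.sqrt (2 * n) := by
      rw [Nat.card_Icc, Nat.add_sub_cancel]
    rw [Finset.prod_const]
    refine pow_le_pow_right₀ n2_pos ((Finset.card_le_card fun x hx => ?_).trans hcard.le)
    obtain ⟨h1, h2⟩ := Finset.mem_filter.1 hx
    exact Finset.mem_Icc.mpr ⟨(Finset.mem_filter.1 h1).2.one_lt.le, h2⟩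
  · refine (Finset.prod_le_prod' fun p hp => (?_ : f p ≤ p)).trans ?_
    · obtain ⟨h1, h2⟩ := Finset.mem_filter.1 hp
      refine (pow_le_pow_right₀ (Finset.mem_filter.1 h1).2.one_lt.le ?_).trans (pow_one p).le
      exact Nat.factorization_choose_le_one (Nat.sqrt_lt'.mp <| not_le.1 h2)
    refine Finset.prod_le_prod_of_subset_of_one_le' (Finset.filter_subset _ _) ?_
    exact fun p hp _ => (Finset.mem_filter.1 hp).2.one_lt.le

/-- The key analytic inequality. -/
lemma analytic_ineq (y : ℝ) (hy : (1000000 : ℝ) ≤ y) :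
    y / 3 + (Real.sqrt y + 1) * Real.log y ≤ (y - 1) * Real.log 2 := by
  have hy0 : (0 : ℝ) < y := by linarith
  set t : ℝ := Real.sqrt (Real.sqrt y) with ht
  have hs0 : (0 : ℝ) ≤ Real.sqrt y := Real.sqrt_nonneg y
  have ht0 : (0 : ℝ) < t := Real.sqrt_pos.mpr (Real.sqrt_pos.mpr hy0)
  have ht2 : t ^ 2 = Real.sqrt y := Real.sq_sqrt hs0
  have ht4 : t ^ 4 = y := by
    have : (t ^ 2) ^ 2 = y := by rw [ht2]; exact Real.sq_sqrt hy0.le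
    nlinarith [this]
  have ht31 : (31 : ℝ) ≤ t := by
    by_contra h
    push_neg at h
    have h2' : t ^ 2 < 961 := by nlinarith
    have h4' : t ^ 4 < 923521 := by nlinarith
    linarith [ht4 ▸ h4']
  have hlog : Real.log y = 4 * Real.log t := by
    rw [ht, Real.log_sqrt hs0, Real.log_sqrt hy0.le]; ring
  have hlogt : Real.log t ≤ t := (Real.log_le_sub_one_of_pos ht0).trans (by linarith)
  have hlogt0 : 0 ≤ Real.log t := Real.log_nonneg (by linarith)
  have hl2 : (0.6931471803 : ℝ) < Real.log 2 := Real.log_two_gt_d9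
  rw [hlog, ← ht2, ← ht4]
  nlinarith [mul_le_mul_of_nonneg_left hlogt (by positivity : (0:ℝ) ≤ 4 * (t^2 + 1)),
    pow_pos ht0 3, pow_pos ht0 4]

/-- For all sufficiently large natural numbers `x`, the product of all primes `p ≤ x`
is at least `(x/e)^(x/(3·ln x))`. -/
theorem primorial_lower_bound :
    ∃ x₀ : ℕ, ∀ x : ℕ, x ≥ x₀ →
      (∏ p ∈ (Finset.range (x + 1)).filter (fun p => p.Prime), (p : ℝ))
        ≥ ((x : ℝ) / Real.exp 1) ^ ((x : ℝ) / (3 * Real.log x)) := by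
  use 1000000
  intro x hx
  have hx2 : (2 : ℕ) ≤ x := by omega
  set n : ℕ := x / 2 with hn
  have hn0 : 0 < n := by omega
  have h2n : 2 * n ≤ x := by omega
  have hxn : x ≤ 2 * n + 1 := by omega
  -- natural number bound
  set s : ℕ := Nat.sqrt x with hs
  set Px : ℕ := ∏ p ∈ (Finset.range (x + 1)).filter Nat.Prime, p with hPx
  have key : 2 ^ (x - 1) ≤ x ^ (s + 1) * Px := by
    have h1 : 4 ^ n ≤ 2 * n * Nat.centralBinom n :=
      Nat.four_pow_le_two_mul_self_mul_centralBinom n hn0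
    have h2 := centralBinom_le_pow_mul_primorial n hn0
    have h3 : (∏ p ∈ (Finset.range (2 * n + 1)).filter Nat.Prime, p) ≤ Px := by
      refine Finset.prod_le_prod_of_subset_of_one_le' ?_ ?_
      · exact Finset.filter_subset_filter _ (Finset.range_subset_range.mpr (by omega))
      · exact fun p hp _ => (Finset.mem_filter.1 hp).2.one_lt.le
    have h4 : 2 ^ (x - 1) ≤ 4 ^ n := by
      have : (4 : ℕ) ^ n = 2 ^ (2 * n) := by
        rw [pow_mul]; norm_num
      rw [this]
      exact Nat.pow_le_pow_right (by norm_num) (by omega)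
    have h5 : 2 * n * (2 * n) ^ Nat.sqrt (2 * n) ≤ x ^ (s + 1) := by
      calc 2 * n * (2 * n) ^ Nat.sqrt (2 * n) ≤ x * x ^ s := by
            refine Nat.mul_le_mul h2n ?_
            calc (2 * n) ^ Nat.sqrt (2 * n) ≤ x ^ Nat.sqrt (2 * n) :=
                  Nat.pow_le_pow_left h2n _
              _ ≤ x ^ s := Nat.pow_le_pow_right (by omega) (Nat.sqrt_le_sqrt h2n)
        _ = x ^ (s + 1) := by ring
    calc 2 ^ (x - 1) ≤ 4 ^ n := h4
      _ ≤ 2 * n * Nat.centralBinom n := h1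
      _ ≤ 2 * n * ((2 * n) ^ Nat.sqrt (2 * n) *
            ∏ p ∈ (Finset.range (2 * n + 1)).filter Nat.Prime, p) := Nat.mul_le_mul_left _ h2
      _ = 2 * n * (2 * n) ^ Nat.sqrt (2 * n) *
            ∏ p ∈ (Finset.range (2 * n + 1)).filter Nat.Prime, p := by ring
      _ ≤ x ^ (s + 1) * Px := Nat.mul_le_mul h5 h3
  -- move to the reals
  have hxR : (1000000 : ℝ) ≤ (x : ℝ) := by exact_mod_cast hx
  have hx0R : (0 : ℝ) < x := by linarith
  have hlogx : (0 : ℝ) < Real.log x := Real.log_pos (by linarith)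
  have hsR : (s : ℝ) ≤ Real.sqrt x := by
    rw [show ((s : ℝ)) = Real.sqrt ((s : ℝ)^2) from (Real.sqrt_sq (by positivity)).symm]
    apply Real.sqrt_le_sqrt
    exact_mod_cast Nat.sqrt_le' x
  -- the product is at least exp の bound
  have hProd : (Px : ℝ) = ∏ p ∈ (Finset.range (x + 1)).filter (fun p => p.Prime), (p : ℝ) := by
    rw [hPx]; push_cast; ring
  have hkeyR : (2 : ℝ) ^ (x - 1 : ℕ) ≤ (x : ℝ) ^ (s + 1 : ℕ) * Px := by
    exact_mod_cast key
  have hxpow_pos : (0 : ℝ) < (x : ℝ) ^ (s + 1 : ℕ) := by positivity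
  have hPx_lb : (2 : ℝ) ^ (x - 1 : ℕ) / (x : ℝ) ^ (s + 1 : ℕ) ≤ (Px : ℝ) := by
    rw [div_le_iff₀ hxpow_pos, mul_comm]
    exact hkeyR
  have hcast1 : ((x : ℝ) - 1) = ((x - 1 : ℕ) : ℝ) := by
    push_cast [Nat.cast_sub (show 1 ≤ x by omega)]; ring
  have hcast2 : ((s : ℝ) + 1) = ((s + 1 : ℕ) : ℝ) := by push_cast; ring
  have hE1 : (2 : ℝ) ^ (x - 1 : ℕ) = Real.exp (((x : ℝ) - 1) * Real.log 2) := by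
    rw [hcast1, Real.exp_nat_mul, Real.exp_log (by norm_num : (0:ℝ) < 2)]
  have hE2 : (x : ℝ) ^ (s + 1 : ℕ) = Real.exp (((s : ℝ) + 1) * Real.log x) := by
    rw [hcast2, Real.exp_nat_mul, Real.exp_log hx0R]
  have hE : (2 : ℝ) ^ (x - 1 : ℕ) / (x : ℝ) ^ (s + 1 : ℕ)
      = Real.exp (((x : ℝ) - 1) * Real.log 2 - ((s : ℝ) + 1) * Real.log x) := by
    rw [Real.exp_sub, hE1, hE2]
  -- bound the right-hand side by an exponential
  have hbase : (0 : ℝ) < (x : ℝ) / Real.exp 1 := by positivity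
  have hRHS : ((x : ℝ) / Real.exp 1) ^ ((x : ℝ) / (3 * Real.log x))
      = Real.exp ((Real.log x - 1) * ((x : ℝ) / (3 * Real.log x))) := by
    rw [Real.rpow_def_of_pos hbase]
    congr 2
    rw [Real.log_div (by positivity) (Real.exp_ne_zero 1), Real.log_exp]
  have hexp1 : (Real.log x - 1) * ((x : ℝ) / (3 * Real.log x)) ≤ (x : ℝ) / 3 := by
    have hfrac : (0 : ℝ) ≤ (x : ℝ) / (3 * Real.log x) := by positivity
    have h1 : (Real.log x - 1) * ((x : ℝ) / (3 * Real.log x))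
        ≤ Real.log x * ((x : ℝ) / (3 * Real.log x)) := by
      apply mul_le_mul_of_nonneg_right (by linarith) hfrac
    have h2 : Real.log x * ((x : ℝ) / (3 * Real.log x)) = (x : ℝ) / 3 := by
      field_simp
    linarith
  have hexp2 : (x : ℝ) / 3 ≤ ((x : ℝ) - 1) * Real.log 2 - (Real.sqrt x + 1) * Real.log x := by
    have := analytic_ineq (x : ℝ) hxR
    linarith
  have hexp3 : ((x : ℝ) - 1) * Real.log 2 - (Real.sqrt x + 1) * Real.log x
      ≤ ((x : ℝ) - 1) * Real.log 2 - ((s : ℝ) + 1) * Real.log x := by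
    have : ((s : ℝ) + 1) * Real.log x ≤ (Real.sqrt x + 1) * Real.log x :=
      mul_le_mul_of_nonneg_right (by linarith) hlogx.le
    linarith
  calc ((x : ℝ) / Real.exp 1) ^ ((x : ℝ) / (3 * Real.log x))
      = Real.exp ((Real.log x - 1) * ((x : ℝ) / (3 * Real.log x))) := hRHS
    _ ≤ Real.exp (((x : ℝ) - 1) * Real.log 2 - ((s : ℝ) + 1) * Real.log x) := by
        apply Real.exp_le_exp.mpr; linarith
    _ = (2 : ℝ) ^ (x - 1 : ℕ) / (x : ℝ) ^ (s + 1 : ℕ) := hE.symm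
    _ ≤ (Px : ℝ) := hPx_lb
    _ = _ := hProd
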